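/- Let f0 : GF(3)³ → GF(3) be defined by f0(x1, x2, 0) = x1 − x2, f0(x1, x2, 1) = 1 if (x1, x2) = (2, 0) and 0 otherwise, and f0(x1, x2, 2) = 0 if (x1, x2) = (0, 2) and 1 otherwise. For any zero-error code for f0 with block length k, with (X1, X2, X3) uniformly distributed on (GF(3)^k)³, Z1 := φ1(X1, φ31(X3)), Z2 := φ2(X2, φ32(X3)), and F0 := f0^k(X1, X2, X3), one has H((Z1, Z2) | F0, X3) ≥ k·(8/9 + (1/3)·log₂ 3). -/

import Mathlib

open Classical

/-- A zero-error (variable-length) code for computing `f` componentwise with block length `k`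
on the diamond network: encoders `phi31, phi32` (from `s₃`), `phi1, phi2` (to the terminal)
and a decoder `psi` that recovers `f^k` with zero error. -/
structure ZECode (A B Z : Type*) (k : ℕ) (f : A → A → A → B) where
  phi31 : (Fin k → A) → List Z
  phi32 : (Fin k → A) → List Z
  phi1 : (Fin k → A) → List Z → List Z
  phi2 : (Fin k → A) → List Z → List Z
  psi : List Z → List Z → (Fin k → B)
  zero_error : ∀ x1 x2 x3 : Fin k → A,
    psi (phi1 x1 (phi31 x3)) (phi2 x2 (phi32 x3)) = fun i => f (x1 i) (x2 i) (x3 i)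

/-- Base-2 Shannon entropy of the random variable `W` when the underlying finite sample
space `Ω` carries the uniform distribution (convention `0·log(1/0) = 0`). -/
noncomputable def uH {Ω S : Type*} [Fintype Ω] (W : Ω → S) : ℝ :=
  ∑ s ∈ Finset.univ.image W,
    (((Finset.univ.filter fun ω => W ω = s).card : ℝ) / (Fintype.card Ω : ℝ)) *
      Real.logb 2 ((Fintype.card Ω : ℝ) / ((Finset.univ.filter fun ω => W ω = s).card : ℝ))

/-- Base-2 conditional Shannon entropy `H(W | V)` for the uniform distribution on `Ω`:
`H(W|V) = ∑_v P(V = v) · H(W | V = v)`, with the convention `0·log(1/0) = 0`. -/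
noncomputable def uCondH {Ω S T : Type*} [Fintype Ω] (W : Ω → S) (V : Ω → T) : ℝ :=
  ∑ v ∈ Finset.univ.image V, ∑ s ∈ Finset.univ.image W,
    (((Finset.univ.filter fun ω => W ω = s ∧ V ω = v).card : ℝ) / (Fintype.card Ω : ℝ)) *
      Real.logb 2 (((Finset.univ.filter fun ω => V ω = v).card : ℝ) /
        ((Finset.univ.filter fun ω => W ω = s ∧ V ω = v).card : ℝ))

/-- `x1 ≡^{a3} y1 |₁` : `f(x1, x2, a3) = f(y1, x2, a3)` for all `x2`. -/
def eqv1 {A B : Type*} (f : A → A → A → B) (a3 : A) (x y : A) : Prop :=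
  ∀ x2, f x x2 a3 = f y x2 a3

/-- `x2 ≡^{a3} y2 |₂` : `f(x1, x2, a3) = f(x1, y2, a3)` for all `x1`. -/
def eqv2 {A B : Type*} (f : A → A → A → B) (a3 : A) (x y : A) : Prop :=
  ∀ x1, f x1 x a3 = f x1 y a3

/-- Componentwise extension of `≡^{a3}|₁` to blocks of length `k`. -/
def eqv1k {A B : Type*} (f : A → A → A → B) {k : ℕ} (a3 : Fin k → A) (x y : Fin k → A) : Prop :=
  ∀ i, eqv1 f (a3 i) (x i) (y i)

/-- Componentwise extension of `≡^{a3}|₂` to blocks of length `k`. -/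
def eqv2k {A B : Type*} (f : A → A → A → B) {k : ℕ} (a3 : Fin k → A) (x y : Fin k → A) : Prop :=
  ∀ i, eqv2 f (a3 i) (x i) (y i)

/-- `≡^{a3}|₁` as a setoid on `A`. -/
def eqv1Setoid {A B : Type*} (f : A → A → A → B) (a3 : A) : Setoid A where
  r := eqv1 f a3
  iseqv := ⟨fun _ _ => rfl, fun h x2 => (h x2).symm, fun h h' x2 => (h x2).trans (h' x2)⟩

/-- `≡^{a3}|₂` as a setoid on `A`. -/
def eqv2Setoid {A B : Type*} (f : A → A → A → B) (a3 : A) : Setoid A where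
  r := eqv2 f a3
  iseqv := ⟨fun _ _ => rfl, fun h x1 => (h x1).symm, fun h h' x1 => (h x1).trans (h' x1)⟩

/-- `≡^{a3}|₁` as a setoid on `A^k`. -/
def eqv1kSetoid {A B : Type*} (f : A → A → A → B) {k : ℕ} (a3 : Fin k → A) :
    Setoid (Fin k → A) where
  r := eqv1k f a3
  iseqv := ⟨fun _ _ _ => rfl, fun h i x2 => (h i x2).symm,
    fun h h' i x2 => (h i x2).trans (h' i x2)⟩

/-- `≡^{a3}|₂` as a setoid on `A^k`. -/
def eqv2kSetoid {A B : Type*} (f : A → A → A → B) {k : ℕ} (a3 : Fin k → A) :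
    Setoid (Fin k → A) where
  r := eqv2k f a3
  iseqv := ⟨fun _ _ _ => rfl, fun h i x1 => (h i x1).symm,
    fun h h' i x1 => (h i x1).trans (h' i x1)⟩

/-- The example demand function `f0 : GF(3)³ → GF(3)` of Table I:
`f0(x1, x2, 0) = x1 - x2`; `f0(x1, x2, 1) = 1` iff `(x1, x2) = (2, 0)` else `0`;
`f0(x1, x2, 2) = 0` iff `(x1, x2) = (0, 2)` else `1`. -/
def f0 (x1 x2 x3 : ZMod 3) : ZMod 3 :=
  if x3 = 0 then x1 - x2
  else if x3 = 1 then (if x1 = 2 ∧ x2 = 0 then 1 else 0)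
  else (if x1 = 0 ∧ x2 = 2 then 0 else 1)

noncomputable def pH {Ω S : Type*} [Fintype Ω] (W : Ω → S) : ℝ :=
  ∑ ω : Ω, (1 / (Fintype.card Ω : ℝ)) *
    Real.logb 2 ((Fintype.card Ω : ℝ) / ((Finset.univ.filter fun ω' => W ω' = W ω).card : ℝ))

lemma filter_card_pos {Ω S : Type*} [Fintype Ω] (W : Ω → S) (ω : Ω) :
    (0:ℝ) < ((Finset.univ.filter fun ω' => W ω' = W ω).card : ℝ) := by
  have : ω ∈ (Finset.univ.filter fun ω' => W ω' = W ω) := by simp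
  exact_mod_cast Finset.card_pos.mpr ⟨ω, this⟩

lemma pH_congr {Ω S T : Type*} [Fintype Ω] (W : Ω → S) (U : Ω → T)
    (h : ∀ ω ω', W ω = W ω' ↔ U ω = U ω') : pH W = pH U := by
  refine Finset.sum_congr rfl fun ω _ => ?_
  have : (Finset.univ.filter fun ω' => W ω' = W ω) = (Finset.univ.filter fun ω' => U ω' = U ω) := by
    ext ω'; simp [h ω' ω]
  rw [this]

lemma pH_mono {Ω S T : Type*} [Fintype Ω] [Nonempty Ω] (W : Ω → S) (U : Ω → T)
    (h : ∀ ω ω', W ω = W ω' → U ω = U ω') : pH U ≤ pH W := by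
  refine Finset.sum_le_sum fun ω _ => ?_
  have hN : (0:ℝ) < (Fintype.card Ω : ℝ) := by positivity
  refine mul_le_mul_of_nonneg_left ?_ (by positivity)
  have hsub : (Finset.univ.filter fun ω' => W ω' = W ω) ⊆
      (Finset.univ.filter fun ω' => U ω' = U ω) := by
    intro ω' hω'; simp only [Finset.mem_filter, Finset.mem_univ, true_and] at *
    exact h ω' ω hω'
  have hm : (0:ℝ) < ((Finset.univ.filter fun ω' => W ω' = W ω).card : ℝ) := by
    have : ω ∈ (Finset.univ.filter fun ω' => W ω' = W ω) := by simp
    exact_mod_cast Finset.card_pos.mpr ⟨ω, this⟩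
  have hle : ((Finset.univ.filter fun ω' => W ω' = W ω).card : ℝ)
      ≤ ((Finset.univ.filter fun ω' => U ω' = U ω).card : ℝ) := by
    exact_mod_cast Finset.card_le_card hsub
  have hm' : (0:ℝ) < ((Finset.univ.filter fun ω' => U ω' = U ω).card : ℝ) := lt_of_lt_of_le hm hle
  refine Real.logb_le_logb_of_le (by norm_num) (div_pos hN hm') ?_
  exact div_le_div_of_nonneg_left (le_of_lt hN) hm hle

lemma pH_comp_equiv {Ω Ω' S : Type*} [Fintype Ω] [Fintype Ω'] (e : Ω' ≃ Ω) (W : Ω → S) :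
    pH (fun ω' => W (e ω')) = pH W := by
  unfold pH
  rw [← Equiv.sum_comp e (fun ω => (1 / (Fintype.card Ω : ℝ)) *
    Real.logb 2 ((Fintype.card Ω : ℝ) / ((Finset.univ.filter fun ω'' => W ω'' = W ω).card : ℝ)))]
  rw [Fintype.card_congr e]
  refine Finset.sum_congr rfl fun ω _ => ?_
  have hcard : (Finset.univ.filter fun ω' => W (e ω') = W (e ω)).card
      = (Finset.univ.filter fun ω'' => W ω'' = W (e ω)).card := by
    refine Finset.card_bij (fun a _ => e a) ?_ (fun a _ b _ hab => e.injective hab) ?_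
    · intro a ha
      simp only [Finset.mem_filter, Finset.mem_univ, true_and]
      simpa using ha
    · intro b hb
      simp only [Finset.mem_filter, Finset.mem_univ, true_and] at hb
      exact ⟨e.symm b, by simpa using hb, by simp⟩
  simp only []
  rw [hcard]

lemma pH_prod {Ω₁ Ω₂ S T : Type*} [Fintype Ω₁] [Fintype Ω₂] [Nonempty Ω₁] [Nonempty Ω₂]
    (W₁ : Ω₁ → S) (W₂ : Ω₂ → T) :
    pH (fun p : Ω₁ × Ω₂ => (W₁ p.1, W₂ p.2)) = pH W₁ + pH W₂ := by
  have hN₁ : (0:ℝ) < (Fintype.card Ω₁ : ℝ) := by positivity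
  have hN₂ : (0:ℝ) < (Fintype.card Ω₂ : ℝ) := by positivity
  have hcard : ∀ p : Ω₁ × Ω₂,
      (Finset.univ.filter fun q : Ω₁ × Ω₂ => (W₁ q.1, W₂ q.2) = (W₁ p.1, W₂ p.2)).card
      = (Finset.univ.filter fun a => W₁ a = W₁ p.1).card *
        (Finset.univ.filter fun b => W₂ b = W₂ p.2).card := by
    intro p
    rw [← Finset.card_product]
    congr 1
    rw [← Finset.filter_product]
    rw [← Finset.univ_product_univ]
    apply Finset.filter_congr
    intro q _
    simp [Prod.ext_iff]
  have key : ∀ p : Ω₁ × Ω₂,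
      (1 / (Fintype.card (Ω₁ × Ω₂) : ℝ)) *
        Real.logb 2 ((Fintype.card (Ω₁ × Ω₂) : ℝ) /
          ((Finset.univ.filter fun q : Ω₁ × Ω₂ => (W₁ q.1, W₂ q.2) = (W₁ p.1, W₂ p.2)).card : ℝ))
      = (1 / ((Fintype.card Ω₁ : ℝ) * (Fintype.card Ω₂ : ℝ))) *
        (Real.logb 2 ((Fintype.card Ω₁ : ℝ) / ((Finset.univ.filter fun a => W₁ a = W₁ p.1).card : ℝ))
        + Real.logb 2 ((Fintype.card Ω₂ : ℝ) / ((Finset.univ.filter fun b => W₂ b = W₂ p.2).card : ℝ))) := by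
    intro p
    have h1 := filter_card_pos W₁ p.1
    have h2 := filter_card_pos W₂ p.2
    rw [Fintype.card_prod, hcard p]
    push_cast
    rw [show ((Fintype.card Ω₁ : ℝ) * (Fintype.card Ω₂ : ℝ)) /
        (((Finset.univ.filter fun a => W₁ a = W₁ p.1).card : ℝ) *
         ((Finset.univ.filter fun b => W₂ b = W₂ p.2).card : ℝ))
      = ((Fintype.card Ω₁ : ℝ) / ((Finset.univ.filter fun a => W₁ a = W₁ p.1).card : ℝ)) *
        ((Fintype.card Ω₂ : ℝ) / ((Finset.univ.filter fun b => W₂ b = W₂ p.2).card : ℝ)) from by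
        field_simp]
    rw [Real.logb_mul (by positivity) (by positivity)]
  set N₁ := (Fintype.card Ω₁ : ℝ)
  set N₂ := (Fintype.card Ω₂ : ℝ)
  set L₁ : Ω₁ → ℝ := fun a =>
    Real.logb 2 (N₁ / ((Finset.univ.filter fun a' => W₁ a' = W₁ a).card : ℝ)) with hL₁
  set L₂ : Ω₂ → ℝ := fun b =>
    Real.logb 2 (N₂ / ((Finset.univ.filter fun b' => W₂ b' = W₂ b).card : ℝ)) with hL₂
  have step1 : pH (fun p : Ω₁ × Ω₂ => (W₁ p.1, W₂ p.2))
      = ∑ a : Ω₁, ∑ b : Ω₂, (1 / (N₁ * N₂)) * (L₁ a + L₂ b) := by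
    unfold pH
    rw [Fintype.sum_prod_type]
    refine Finset.sum_congr rfl fun a _ => Finset.sum_congr rfl fun b _ => ?_
    convert key (a, b) using 5
    congr 1
    ext x
    simp
  rw [step1]
  calc (∑ a : Ω₁, ∑ b : Ω₂, (1 / (N₁ * N₂)) * (L₁ a + L₂ b))
      = ∑ a : Ω₁, ((1 / (N₁ * N₂)) * (N₂ * L₁ a) + (1 / (N₁ * N₂)) * ∑ b : Ω₂, L₂ b) := by
        refine Finset.sum_congr rfl fun a _ => ?_
        rw [← Finset.mul_sum, Finset.sum_add_distrib, Finset.sum_const, Finset.card_univ,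
          nsmul_eq_mul, mul_add]
    _ = (1 / (N₁ * N₂)) * (N₂ * ∑ a : Ω₁, L₁ a) + (1 / (N₁ * N₂)) * (N₁ * ∑ b : Ω₂, L₂ b) := by
        rw [Finset.sum_add_distrib, Finset.sum_const, Finset.card_univ, nsmul_eq_mul,
          ← Finset.mul_sum, ← Finset.mul_sum]
        ring
    _ = ∑ a : Ω₁, (1 / N₁) * L₁ a + ∑ b : Ω₂, (1 / N₂) * L₂ b := by
        rw [← Finset.mul_sum, ← Finset.mul_sum]
        have h1 : N₁ ≠ 0 := ne_of_gt hN₁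
        have h2 : N₂ ≠ 0 := ne_of_gt hN₂
        field_simp
    _ = pH W₁ + pH W₂ := rfl

def finConsEquiv (U : Type*) (n : Nat) : (U × (Fin n → U)) ≃ (Fin (n+1) → U) where
  toFun p := Fin.cons p.1 p.2
  invFun q := (q 0, fun i => q i.succ)
  left_inv p := by simp
  right_inv q := by funext i; refine Fin.cases ?_ ?_ i <;> simp

lemma pH_subsingleton {Q S : Type*} [Fintype Q] [Nonempty Q] [Subsingleton Q] (W : Q → S) :
    pH W = 0 := by
  unfold pH
  refine Finset.sum_eq_zero fun w _ => ?_
  have hN : Fintype.card Q = 1 := Fintype.card_eq_one_iff_nonempty_unique.mpr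
    ⟨⟨⟨Classical.arbitrary Q⟩, fun b => Subsingleton.elim b _⟩⟩
  have h1 : (Finset.univ.filter fun w' => W w' = W w).card = 1 := by
    apply le_antisymm
    · simpa [hN] using Finset.card_filter_le (Finset.univ : Finset Q) (fun w' => W w' = W w)
    · exact Finset.card_pos.mpr ⟨w, by simp⟩
  rw [h1, hN]
  simp

lemma pH_iid {U S : Type*} [Fintype U] [Nonempty U] (g : U → S) (k : Nat) :
    pH (fun w : Fin k → U => fun i => g (w i)) = k * pH g := by
  induction k with
  | zero => simpa using pH_subsingleton (fun w : Fin 0 → U => fun i => g (w i))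
  | succ n ih =>
      rw [← pH_comp_equiv (finConsEquiv U n) (fun w : Fin (n+1) → U => fun i => g (w i))]
      have hc : pH (fun p : U × (Fin n → U) => (fun i => g ((finConsEquiv U n p) i)))
          = pH (fun p : U × (Fin n → U) => (g p.1, fun i => g (p.2 i))) := by
        apply pH_congr
        intro p q
        have hp : ∀ r : U × (Fin n → U), (fun i => g ((finConsEquiv U n r) i))
            = Fin.cons (g r.1) (fun i => g (r.2 i)) := by
          intro r
          funext i
          refine Fin.cases ?_ ?_ i <;> simp [finConsEquiv]
        rw [hp p, hp q, Fin.cons_inj, Prod.ext_iff]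
      rw [hc, pH_prod g (fun (w : Fin n → U) => fun i => g (w i)), ih]
      push_cast
      ring

private lemma logb_diff {n mp mp2 mv mv2 : ℝ} (h : mp = mp2) (h' : mv = mv2)
    (hn : 0 < n) (hp : 0 < mp) (hv : 0 < mv) :
    (1/n) * Real.logb 2 (n/mp) - (1/n) * Real.logb 2 (n/mv)
      = (1/n) * Real.logb 2 (mv2/mp2) := by
  subst h; subst h'
  rw [Real.logb_div (ne_of_gt hn) (ne_of_gt hp), Real.logb_div (ne_of_gt hn) (ne_of_gt hv),
    Real.logb_div (ne_of_gt hv) (ne_of_gt hp)]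
  ring

lemma uCondH_eq_pH {Ω S T : Type*} [Fintype Ω] [Nonempty Ω] (W : Ω → S) (V : Ω → T) :
    uCondH W V = pH (fun ω => (W ω, V ω)) - pH V := by
  have hN : (0:ℝ) < (Fintype.card Ω : ℝ) := by positivity
  -- RHS as a per-omega sum
  have hR : pH (fun ω => (W ω, V ω)) - pH V
      = ∑ ω : Ω, (1/(Fintype.card Ω : ℝ)) * Real.logb 2
          (((Finset.univ.filter fun ω' => V ω' = V ω).card : ℝ) /
           ((Finset.univ.filter fun ω' => W ω' = W ω ∧ V ω' = V ω).card : ℝ)) := by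
    unfold pH
    rw [← Finset.sum_sub_distrib]
    refine Finset.sum_congr rfl fun ω _ => ?_
    refine logb_diff ?_ rfl hN (filter_card_pos (fun ω => (W ω, V ω)) ω) (filter_card_pos V ω)
    norm_cast
    congr 1
    ext x
    simp [Prod.ext_iff]
  rw [hR]
  -- LHS as a per-omega sum
  -- P := fun ω => (V ω, W ω)
  have key := Finset.sum_comp (s := (Finset.univ : Finset Ω))
    (fun q : T × S => (1/(Fintype.card Ω : ℝ)) * Real.logb 2
      (((Finset.univ.filter fun ω' => V ω' = q.1).card : ℝ) /
       ((Finset.univ.filter fun ω' => W ω' = q.2 ∧ V ω' = q.1).card : ℝ)))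
    (fun ω => (V ω, W ω))
  -- key : ∑ ω, F (P ω) = ∑ q in image P, card(filter P=q) • F q
  rw [uCondH]
  rw [show (∑ ω : Ω, (1/(Fintype.card Ω : ℝ)) * Real.logb 2
          (((Finset.univ.filter fun ω' => V ω' = V ω).card : ℝ) /
           ((Finset.univ.filter fun ω' => W ω' = W ω ∧ V ω' = V ω).card : ℝ)))
      = ∑ q ∈ Finset.univ.image (fun ω => (V ω, W ω)),
          ((Finset.univ.filter fun ω => (V ω, W ω) = q).card : ℕ) •
          ((1/(Fintype.card Ω : ℝ)) * Real.logb 2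
            (((Finset.univ.filter fun ω' => V ω' = q.1).card : ℝ) /
             ((Finset.univ.filter fun ω' => W ω' = q.2 ∧ V ω' = q.1).card : ℝ))) from key]
  -- extend to the product of images
  rw [Finset.sum_subset (Finset.image_subset_iff.mpr
      (fun ω _ => Finset.mem_product.mpr ⟨Finset.mem_image_of_mem V (Finset.mem_univ ω),
        Finset.mem_image_of_mem W (Finset.mem_univ ω)⟩)
    : Finset.univ.image (fun ω => (V ω, W ω)) ⊆ (Finset.univ.image V) ×ˢ (Finset.univ.image W))]
  · -- now equal sums over the product
    rw [Finset.sum_product]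
    refine Finset.sum_congr rfl fun v hv => Finset.sum_congr rfl fun s hs => ?_
    have hc : (Finset.univ.filter fun ω => (V ω, W ω) = (v, s)).card
        = (Finset.univ.filter fun ω => W ω = s ∧ V ω = v).card := by
      congr 1; ext x; simp [Prod.ext_iff, and_comm]
    rw [nsmul_eq_mul, hc]
    ring
  · intro q hq hnq
    have : (Finset.univ.filter fun ω => (V ω, W ω) = q).card = 0 := by
      rw [Finset.card_eq_zero, Finset.filter_eq_empty_iff]
      intro ω _
      intro h
      exact hnq (h ▸ Finset.mem_image_of_mem _ (Finset.mem_univ ω))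
    rw [this]
    simp

def r1 (a3 x : ZMod 3) : ZMod 3 :=
  if a3 = 0 then x else if a3 = 1 then (if x = 2 then 2 else 0) else (if x = 0 then 0 else 1)

def r2 (a3 x : ZMod 3) : ZMod 3 :=
  if a3 = 0 then x else if a3 = 1 then (if x = 0 then 0 else 1) else (if x = 2 then 2 else 0)

lemma r1_eq_of_eqv : ∀ a3 x y : ZMod 3, (∀ x2, f0 x x2 a3 = f0 y x2 a3) → r1 a3 x = r1 a3 y := by
  decide

lemma r2_eq_of_eqv : ∀ a3 x y : ZMod 3, (∀ x1, f0 x1 x a3 = f0 x1 y a3) → r2 a3 x = r2 a3 y := by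
  decide

abbrev A3 := ZMod 3 × ZMod 3 × ZMod 3

def cHat (u : A3) : A3 := (r1 u.2.2 u.1, r2 u.2.2 u.2.1, u.2.2)

def gHat (u : A3) : ZMod 3 × ZMod 3 := (f0 u.1 u.2.1 u.2.2, u.2.2)

def Mc (u : A3) : ℕ := (Finset.univ.filter fun u' => cHat u' = cHat u).card

def Mg (u : A3) : ℕ := (Finset.univ.filter fun u' => gHat u' = gHat u).card

lemma pH_eq_of_card {Ω S : Type*} [Fintype Ω] (W : Ω → S) (m : Ω → ℕ)
    (hm : ∀ ω, (Finset.univ.filter fun ω' => W ω' = W ω).card = m ω) :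
    pH W = ∑ ω : Ω, (1/(Fintype.card Ω : ℝ)) *
      Real.logb 2 ((Fintype.card Ω : ℝ)/(m ω : ℝ)) := by
  unfold pH; exact Finset.sum_congr rfl fun ω _ => by rw [hm ω]

lemma sum_zmod3 (F : ZMod 3 → ℝ) : ∑ x, F x = F 0 + F 1 + F 2 := by
  show ∑ x : Fin 3, _ = _
  exact Fin.sum_univ_three F

lemma card_A3 : (Fintype.card A3 : ℝ) = 27 := by
  simp [Fintype.card_prod, ZMod.card]

lemma hmc : ∀ u : A3, (@Finset.filter A3 (fun u' => cHat u' = cHat u)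
    (fun a => propDecidable (cHat a = cHat u)) Finset.univ).card = Mc u := by
  intro u
  rw [Finset.filter_congr_decidable]
  rfl

lemma hmg : ∀ u : A3, (@Finset.filter A3 (fun u' => gHat u' = gHat u)
    (fun a => propDecidable (gHat a = gHat u)) Finset.univ).card = Mg u := by
  intro u
  rw [Finset.filter_congr_decidable]
  rfl

lemma pH_cHat : pH cHat = 3 * Real.logb 2 3 - 8/9 := by
  rw [pH_eq_of_card cHat Mc hmc, card_A3]
  rw [Fintype.sum_prod_type]
  simp only [Fintype.sum_prod_type, sum_zmod3]
  simp only [show Mc (0,0,0) = 1 by decide,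
    show Mc (0,0,1) = 2 by decide,
    show Mc (0,0,2) = 2 by decide,
    show Mc (0,1,0) = 1 by decide,
    show Mc (0,1,1) = 4 by decide,
    show Mc (0,1,2) = 2 by decide,
    show Mc (0,2,0) = 1 by decide,
    show Mc (0,2,1) = 4 by decide,
    show Mc (0,2,2) = 1 by decide,
    show Mc (1,0,0) = 1 by decide,
    show Mc (1,0,1) = 2 by decide,
    show Mc (1,0,2) = 4 by decide,
    show Mc (1,1,0) = 1 by decide,
    show Mc (1,1,1) = 4 by decide,
    show Mc (1,1,2) = 4 by decide,
    show Mc (1,2,0) = 1 by decide,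
    show Mc (1,2,1) = 4 by decide,
    show Mc (1,2,2) = 2 by decide,
    show Mc (2,0,0) = 1 by decide,
    show Mc (2,0,1) = 1 by decide,
    show Mc (2,0,2) = 4 by decide,
    show Mc (2,1,0) = 1 by decide,
    show Mc (2,1,1) = 2 by decide,
    show Mc (2,1,2) = 4 by decide,
    show Mc (2,2,0) = 1 by decide,
    show Mc (2,2,1) = 2 by decide,
    show Mc (2,2,2) = 2 by decide,
    Nat.cast_one, Nat.cast_ofNat, div_one]
  have h27 : Real.logb 2 27 = 3 * Real.logb 2 3 := by
    rw [show (27:ℝ) = 3^(3:ℕ) by norm_num, Real.logb_pow]; norm_num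
  have hd : ∀ d : ℝ, d ≠ 0 → Real.logb 2 (27/d) = 3 * Real.logb 2 3 - Real.logb 2 d := by
    intro d hdne
    rw [Real.logb_div (by norm_num) hdne, h27]
  have h2 : Real.logb 2 ((27:ℝ)/2) = 3 * Real.logb 2 3 - 1 := by
    rw [hd 2 (by norm_num), Real.logb_self_eq_one (by norm_num)]
  have h4 : Real.logb 2 ((27:ℝ)/4) = 3 * Real.logb 2 3 - 2 := by
    rw [hd 4 (by norm_num), show (4:ℝ) = 2^(2:ℕ) by norm_num, Real.logb_pow,
      Real.logb_self_eq_one (by norm_num)]; ring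
  have h8 : Real.logb 2 ((27:ℝ)/8) = 3 * Real.logb 2 3 - 3 := by
    rw [hd 8 (by norm_num), show (8:ℝ) = 2^(3:ℕ) by norm_num, Real.logb_pow,
      Real.logb_self_eq_one (by norm_num)]; ring
  have h3 : Real.logb 2 ((27:ℝ)/3) = 2 * Real.logb 2 3 := by
    rw [hd 3 (by norm_num)]; ring
  rw [h27] at *
  rw [h2, h4]
  ring

lemma pH_gHat : pH gHat = (8/3) * Real.logb 2 3 - 16/9 := by
  rw [pH_eq_of_card gHat Mg hmg, card_A3]
  rw [Fintype.sum_prod_type]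
  simp only [Fintype.sum_prod_type, sum_zmod3]
  simp only [show Mg (0,0,0) = 3 by decide,
    show Mg (0,0,1) = 8 by decide,
    show Mg (0,0,2) = 8 by decide,
    show Mg (0,1,0) = 3 by decide,
    show Mg (0,1,1) = 8 by decide,
    show Mg (0,1,2) = 8 by decide,
    show Mg (0,2,0) = 3 by decide,
    show Mg (0,2,1) = 8 by decide,
    show Mg (0,2,2) = 1 by decide,
    show Mg (1,0,0) = 3 by decide,
    show Mg (1,0,1) = 8 by decide,
    show Mg (1,0,2) = 8 by decide,
    show Mg (1,1,0) = 3 by decide,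
    show Mg (1,1,1) = 8 by decide,
    show Mg (1,1,2) = 8 by decide,
    show Mg (1,2,0) = 3 by decide,
    show Mg (1,2,1) = 8 by decide,
    show Mg (1,2,2) = 8 by decide,
    show Mg (2,0,0) = 3 by decide,
    show Mg (2,0,1) = 1 by decide,
    show Mg (2,0,2) = 8 by decide,
    show Mg (2,1,0) = 3 by decide,
    show Mg (2,1,1) = 8 by decide,
    show Mg (2,1,2) = 8 by decide,
    show Mg (2,2,0) = 3 by decide,
    show Mg (2,2,1) = 8 by decide,
    show Mg (2,2,2) = 8 by decide,
    Nat.cast_one, Nat.cast_ofNat, div_one]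
  have h27 : Real.logb 2 27 = 3 * Real.logb 2 3 := by
    rw [show (27:ℝ) = 3^(3:ℕ) by norm_num, Real.logb_pow]; norm_num
  have hd : ∀ d : ℝ, d ≠ 0 → Real.logb 2 (27/d) = 3 * Real.logb 2 3 - Real.logb 2 d := by
    intro d hdne
    rw [Real.logb_div (by norm_num) hdne, h27]
  have h2 : Real.logb 2 ((27:ℝ)/2) = 3 * Real.logb 2 3 - 1 := by
    rw [hd 2 (by norm_num), Real.logb_self_eq_one (by norm_num)]
  have h4 : Real.logb 2 ((27:ℝ)/4) = 3 * Real.logb 2 3 - 2 := by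
    rw [hd 4 (by norm_num), show (4:ℝ) = 2^(2:ℕ) by norm_num, Real.logb_pow,
      Real.logb_self_eq_one (by norm_num)]; ring
  have h8 : Real.logb 2 ((27:ℝ)/8) = 3 * Real.logb 2 3 - 3 := by
    rw [hd 8 (by norm_num), show (8:ℝ) = 2^(3:ℕ) by norm_num, Real.logb_pow,
      Real.logb_self_eq_one (by norm_num)]; ring
  have h3 : Real.logb 2 ((27:ℝ)/3) = 2 * Real.logb 2 3 := by
    rw [hd 3 (by norm_num)]; ring
  rw [h27] at *
  rw [h3, h8]
  ring

def e0k (k : ℕ) : (Fin k → A3) ≃ ((Fin k → ZMod 3) × (Fin k → ZMod 3) × (Fin k → ZMod 3)) where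
  toFun τ := (fun i => (τ i).1, fun i => (τ i).2.1, fun i => (τ i).2.2)
  invFun ω := fun i => (ω.1 i, ω.2.1 i, ω.2.2 i)
  left_inv τ := by funext i; simp
  right_inv ω := rfl

lemma stmt_15_aux {Z : Type*} [Fintype Z] (hZ : 1 < Fintype.card Z)
    {k : ℕ} (hk : 1 ≤ k) (c : ZECode (ZMod 3) (ZMod 3) Z k f0) :
    uCondH
        (fun ω : (Fin k → ZMod 3) × (Fin k → ZMod 3) × (Fin k → ZMod 3) =>
          (c.phi1 ω.1 (c.phi31 ω.2.2), c.phi2 ω.2.1 (c.phi32 ω.2.2)))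
        (fun ω : (Fin k → ZMod 3) × (Fin k → ZMod 3) × (Fin k → ZMod 3) =>
          ((fun i => f0 (ω.1 i) (ω.2.1 i) (ω.2.2 i)), ω.2.2)) ≥
      k * (8 / 9 + (1 / 3) * Real.logb 2 3) := by
  classical
  set W : (Fin k → ZMod 3) × (Fin k → ZMod 3) × (Fin k → ZMod 3) → List Z × List Z :=
    fun ω => (c.phi1 ω.1 (c.phi31 ω.2.2), c.phi2 ω.2.1 (c.phi32 ω.2.2)) with hWdef
  set V : (Fin k → ZMod 3) × (Fin k → ZMod 3) × (Fin k → ZMod 3) →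
      (Fin k → ZMod 3) × (Fin k → ZMod 3) :=
    fun ω => ((fun i => f0 (ω.1 i) (ω.2.1 i) (ω.2.2 i)), ω.2.2) with hVdef
  set R : (Fin k → ZMod 3) × (Fin k → ZMod 3) × (Fin k → ZMod 3) →
      (List Z × List Z) × (Fin k → ZMod 3) := fun ω => (W ω, ω.2.2) with hRdef
  set C : (Fin k → ZMod 3) × (Fin k → ZMod 3) × (Fin k → ZMod 3) → (Fin k → A3) :=
    fun ω => (fun i => cHat (ω.1 i, ω.2.1 i, ω.2.2 i)) with hCdef
  have hV : ∀ ω, V ω = (c.psi (W ω).1 (W ω).2, ω.2.2) := by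
    intro ω
    show ((fun i => f0 (ω.1 i) (ω.2.1 i) (ω.2.2 i)), ω.2.2) = _
    rw [← c.zero_error ω.1 ω.2.1 ω.2.2]
  -- Step 0: conditional entropy as difference
  rw [uCondH_eq_pH W V]
  -- Step 1: (W, V) is mutually determined with R
  have h1 : pH (fun ω => (W ω, V ω)) = pH R := by
    apply pH_congr
    intro ω ω'
    constructor
    · intro h
      have hw : W ω = W ω' := congrArg Prod.fst h
      have hv : V ω = V ω' := congrArg Prod.snd h
      have hx3' := congrArg Prod.snd hv
      have hx3 : ω.2.2 = ω'.2.2 := hx3'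
      rw [hRdef]
      exact Prod.ext hw hx3
    · intro h
      have hw' := congrArg Prod.fst h
      have hw : W ω = W ω' := hw'
      have hx3' := congrArg Prod.snd h
      have hx3 : ω.2.2 = ω'.2.2 := hx3'
      have hv : V ω = V ω' := by rw [hV ω, hV ω', hw, hx3]
      exact Prod.ext hw hv
  -- Step 2: R determines C
  have h2 : pH C ≤ pH R := by
    apply pH_mono
    intro ω ω' h
    have hw' := congrArg Prod.fst h
    have hw : W ω = W ω' := hw'
    have hx3' := congrArg Prod.snd h
    have hx3 : ω.2.2 = ω'.2.2 := hx3'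
    have hZ1 : c.phi1 ω.1 (c.phi31 ω.2.2) = c.phi1 ω'.1 (c.phi31 ω'.2.2) :=
      congrArg Prod.fst hw
    have hZ2 : c.phi2 ω.2.1 (c.phi32 ω.2.2) = c.phi2 ω'.2.1 (c.phi32 ω'.2.2) :=
      congrArg Prod.snd hw
    rw [hCdef]
    funext i
    have key1 : ∀ a2 : ZMod 3, f0 (ω.1 i) a2 (ω.2.2 i) = f0 (ω'.1 i) a2 (ω.2.2 i) := by
      intro a2
      have e1 := c.zero_error ω.1 (fun _ => a2) ω.2.2
      have e2 := c.zero_error ω'.1 (fun _ => a2) ω'.2.2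
      rw [← hx3] at hZ1 e2
      rw [← hZ1] at e2
      exact congrFun (e1.symm.trans e2) i
    have key2 : ∀ a1 : ZMod 3, f0 a1 (ω.2.1 i) (ω.2.2 i) = f0 a1 (ω'.2.1 i) (ω.2.2 i) := by
      intro a1
      have e1 := c.zero_error (fun _ => a1) ω.2.1 ω.2.2
      have e2 := c.zero_error (fun _ => a1) ω'.2.1 ω'.2.2
      rw [← hx3] at hZ2 e2
      rw [← hZ2] at e2
      exact congrFun (e1.symm.trans e2) i
    show cHat (ω.1 i, ω.2.1 i, ω.2.2 i) = cHat (ω'.1 i, ω'.2.1 i, ω'.2.2 i)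
    rw [show ω'.2.2 = ω.2.2 from hx3.symm]
    unfold cHat
    refine Prod.ext ?_ (Prod.ext ?_ rfl)
    · exact r1_eq_of_eqv (ω.2.2 i) (ω.1 i) (ω'.1 i) key1
    · exact r2_eq_of_eqv (ω.2.2 i) (ω.2.1 i) (ω'.2.1 i) key2
  -- Step 3: pH C = k * pH cHat
  have h3 : pH C = k * pH cHat := by
    rw [← pH_comp_equiv (e0k k) C]
    rw [show (fun τ => C (e0k k τ)) = (fun τ : Fin k → A3 => fun i => cHat (τ i)) from ?_]
    · exact pH_iid cHat k
    · funext τ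
      rw [hCdef]
      funext i
      rfl
  -- Step 4: pH V = k * pH gHat
  have h4 : pH V = k * pH gHat := by
    rw [← pH_comp_equiv (e0k k) V]
    rw [show (fun τ => V (e0k k τ)) = (fun τ : Fin k → A3 =>
        ((fun i => f0 (τ i).1 (τ i).2.1 (τ i).2.2), fun i => (τ i).2.2)) from rfl]
    rw [pH_congr _ (fun τ : Fin k → A3 => fun i => gHat (τ i)) ?_]
    · exact pH_iid gHat k
    · intro τ τ'
      constructor
      · intro h
        have ha := congrArg Prod.fst h
        have hb := congrArg Prod.snd h
        funext i
        exact Prod.ext (congrFun ha i) (congrFun hb i)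
      · intro h
        have ha : ∀ i, gHat (τ i) = gHat (τ' i) := fun i => congrFun h i
        refine Prod.ext ?_ ?_
        · funext i
          have h' := congrArg Prod.fst (ha i)
          exact h'
        · funext i
          have h' := congrArg Prod.snd (ha i)
          exact h'
  rw [h1, h4, pH_gHat]
  have h5 : (k : ℝ) * (3 * Real.logb 2 3 - 8/9) ≤ pH R := by
    rw [← pH_cHat, ← h3]; exact h2
  have hk0 : (0:ℝ) ≤ (k:ℝ) := Nat.cast_nonneg k
  nlinarith [h5]

/-- For any zero-error code for `f0`, with `(X1, X2, X3)` uniform on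
`(GF(3)^k)³`, `H((Z1, Z2) | (F0, X3)) ≥ k·(8/9 + (1/3)·log₂ 3)`. -/
theorem stmt_15 {Z : Type*} [Fintype Z] (hZ : 1 < Fintype.card Z)
    {k : ℕ} (hk : 1 ≤ k) (c : ZECode (ZMod 3) (ZMod 3) Z k f0) :
    uCondH
        (fun ω : (Fin k → ZMod 3) × (Fin k → ZMod 3) × (Fin k → ZMod 3) =>
          (c.phi1 ω.1 (c.phi31 ω.2.2), c.phi2 ω.2.1 (c.phi32 ω.2.2)))
        (fun ω : (Fin k → ZMod 3) × (Fin k → ZMod 3) × (Fin k → ZMod 3) =>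
          ((fun i => f0 (ω.1 i) (ω.2.1 i) (ω.2.2 i)), ω.2.2)) ≥
      k * (8 / 9 + (1 / 3) * Real.logb 2 3) := by
  classical
  exact stmt_15_aux hZ hk c
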